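/- Let N ≥ 1, let K be a nonempty subset of ℒ(𝒳^N) and let P : K → ℝ. Define H := {MuHy^N(f|·) : f ∈ K} ⊆ ℒ(𝒩^N) and, for g ∈ H, Q(g) := sup{P(f) : f ∈ K, MuHy^N(f|·) = g}. Assume Q is real-valued on H and avoids sure loss (for every n ≥ 0, g₁,…,g_n ∈ H and λ₁,…,λ_n ≥ 0: max_{m∈𝒩^N} Σ_k λ_k (g_k(m) − Q(g_k)) ≥ 0). Then the point-wise smallest coherent exchangeable lower prevision on ℒ(𝒳^N) dominating P on K is the exchangeable natural extension f ↦ E_Q(MuHy^N(f|·)), where E_Q is the natural extension of Q: E_Q(h) := sup{ min_{m∈𝒩^N} [h(m) − Σ_{k=1}^n λ_k (g_k(m) − Q(g_k))] : n ≥ 0, λ_k ≥ 0, g_k ∈ H } for h ∈ ℒ(𝒩^N). -/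

import Mathlib

open Finset Filter Topology

/-- A coherent lower prevision on the gambles over a finite nonempty space `Ω`. -/
def LowerPrevCoherent {Ω : Type*} [Fintype Ω] [Nonempty Ω] (P : (Ω → ℝ) → ℝ) : Prop :=
  (∀ f : Ω → ℝ, sInf (Set.range f) ≤ P f) ∧
  (∀ (f : Ω → ℝ) (l : ℝ), 0 ≤ l → P (fun ω => l * f ω) = l * P f) ∧
  (∀ f g : Ω → ℝ, P f + P g ≤ P (f + g))

/-- A linear prevision on the gambles over a finite nonempty space `Ω`. -/
def LinearPrevision {Ω : Type*} [Fintype Ω] [Nonempty Ω] (P : (Ω → ℝ) → ℝ) : Prop :=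
  (∀ f g : Ω → ℝ, P (f + g) = P f + P g) ∧
  (∀ (l : ℝ) (f : Ω → ℝ), P (fun ω => l * f ω) = l * P f) ∧
  (∀ f : Ω → ℝ, (∀ ω, 0 ≤ f ω) → 0 ≤ P f) ∧
  P (fun _ => 1) = 1

/-- Exchangeability of a lower prevision on gambles on `X^N`:
`P (πf − f) ≥ 0` for every gamble `f` and every permutation `π`. -/
def Exchangeable {X : Type*} {N : ℕ} (P : ((Fin N → X) → ℝ) → ℝ) : Prop :=
  ∀ (f : (Fin N → X) → ℝ) (π : Equiv.Perm (Fin N)),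
    0 ≤ P (fun x => f (fun k => x (π k)) - f x)

/-- The set of count vectors `𝒩^n`. -/
abbrev CVec (X : Type*) [Fintype X] (n : ℕ) : Type _ := {m : X → ℕ // ∑ x, m x = n}

noncomputable instance {X : Type*} [Fintype X] [DecidableEq X] (n : ℕ) : Fintype (CVec X n) := by
  have key : ∀ (m : CVec X n) (x : X), m.1 x < n + 1 := by
    intro m x
    have h1 : m.1 x ≤ ∑ y, m.1 y :=
      Finset.single_le_sum (fun i _ => Nat.zero_le _) (Finset.mem_univ x)
    have h2 := m.2
    omega
  exact Fintype.ofInjective (fun m : CVec X n => fun x => (⟨m.1 x, key m x⟩ : Fin (n+1)))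
    (fun a b hab => Subtype.ext (funext fun x => congrArg Fin.val (congrFun hab x)))

instance {X : Type*} [Fintype X] [DecidableEq X] [Nonempty X] (n : ℕ) :
    Nonempty (CVec X n) :=
  ⟨⟨fun x => if x = Classical.arbitrary X then n else 0, by simp⟩⟩

/-- The counting map `T^n : X^n → 𝒩^n`. -/
def countMap {X : Type*} [Fintype X] [DecidableEq X] (n : ℕ) (z : Fin n → X) : CVec X n :=
  ⟨fun x => (Finset.univ.filter fun k => z k = x).card, by
    have h := Finset.card_eq_sum_card_fiberwise (f := z) (s := Finset.univ) (t := Finset.univ)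
      (fun k _ => Finset.mem_univ (z k))
    simpa using h.symm⟩

/-- `ν(m) = n!/∏ₓ mₓ!` for a count vector `m ∈ 𝒩^n`. -/
def nu {X : Type*} [Fintype X] {n : ℕ} (m : CVec X n) : ℕ :=
  Nat.multinomial Finset.univ m.1

/-- `ν(μ − m)`, which is `0` unless `m ≤ μ` componentwise. -/
def nuSub {X : Type*} [Fintype X] {n k : ℕ} (μ : CVec X (n + k)) (m : CVec X n) : ℕ :=
  if ∀ x, m.1 x ≤ μ.1 x then Nat.multinomial Finset.univ (fun x => μ.1 x - m.1 x) else 0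

/-- The multiple hyper-geometric prevision `MuHy^n(f|m) = (1/ν(m)) ∑_{z∈[m]} f(z)`. -/
noncomputable def MuHy {X : Type*} [Fintype X] [DecidableEq X] {n : ℕ}
    (f : (Fin n → X) → ℝ) (m : CVec X n) : ℝ :=
  (∑ z ∈ Finset.univ.filter fun z : Fin n → X => countMap n z = m, f z) / (nu m : ℝ)

/-- The `X`-simplex `Σ_X`, as a subtype of `X → ℝ`. -/
abbrev SimplexPt (X : Type*) [Fintype X] : Type _ :=
  {θ : X → ℝ // (∀ x, 0 ≤ θ x) ∧ ∑ x, θ x = 1}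

/-- The Bernstein basis polynomial `B_m(θ) = ν(m) ∏ₓ θₓ^{mₓ}`. -/
noncomputable def Bern {X : Type*} [Fintype X] {n : ℕ} (m : CVec X n) (θ : X → ℝ) : ℝ :=
  (nu m : ℝ) * ∏ x, θ x ^ m.1 x

/-- The count multinomial expectation `CoMn^n(g|θ) = ∑_m g(m) B_m(θ)`. -/
noncomputable def CoMn {X : Type*} [Fintype X] [DecidableEq X] {n : ℕ} (g : CVec X n → ℝ) (θ : X → ℝ) : ℝ :=
  ∑ m : CVec X n, g m * Bern m θ

/-- The multinomial expectation `Mn^n(f|θ) = ∑_z f(z) ∏ₓ θₓ^{Tₓ(z)}`. -/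
noncomputable def Mn {X : Type*} [Fintype X] [DecidableEq X] {n : ℕ}
    (f : (Fin n → X) → ℝ) (θ : X → ℝ) : ℝ :=
  ∑ z : Fin n → X, f z * ∏ x, θ x ^ (countMap n z).1 x

/-- `CoMn^n(g|·)` as a function on the simplex. -/
noncomputable def CoMnP {X : Type*} [Fintype X] [DecidableEq X] {n : ℕ} (g : CVec X n → ℝ)
    (θ : SimplexPt X) : ℝ :=
  CoMn g θ.1

/-- `Mn^n(f|·)` as a function on the simplex. -/
noncomputable def MnP {X : Type*} [Fintype X] [DecidableEq X] {n : ℕ}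
    (f : (Fin n → X) → ℝ) (θ : SimplexPt X) : ℝ :=
  Mn f θ.1

/-- Polynomial gambles on the simplex: the set `𝒱(Σ_X)`. -/
def IsPolyGamble {X : Type*} [Fintype X] [DecidableEq X] (p : SimplexPt X → ℝ) : Prop :=
  ∃ n : ℕ, 1 ≤ n ∧ ∃ g : CVec X n → ℝ, p = fun θ => CoMnP g θ

/-- Coherence of a functional on the linear space `𝒱(Σ_X)` of polynomial gambles. -/
def CoherentOnPoly {X : Type*} [Fintype X] [DecidableEq X] (S : (SimplexPt X → ℝ) → ℝ) : Prop :=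
  (∀ p, IsPolyGamble p → sInf (Set.range p) ≤ S p) ∧
  (∀ p, IsPolyGamble p → ∀ l : ℝ, 0 ≤ l → S (fun θ => l * p θ) = l * S p) ∧
  (∀ p q, IsPolyGamble p → IsPolyGamble q → S p + S q ≤ S (p + q))

/-- Cylindrical extension of a gamble on `X^n` to `X^{n+k}`. -/
def cylExt {X : Type*} {n k : ℕ} (f : (Fin n → X) → ℝ) : (Fin (n + k) → X) → ℝ :=
  fun z => f fun i => z (Fin.castLE (Nat.le_add_right n k) i)

/-- Time consistency of a family of lower previsions on the `X^n`. -/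
def PTimeConsistent {X : Type*} (P : ∀ n : ℕ, ((Fin n → X) → ℝ) → ℝ) : Prop :=
  ∀ n : ℕ, 1 ≤ n → ∀ (k : ℕ) (f : (Fin n → X) → ℝ), P n f = P (n + k) (cylExt f)

/-- Time consistency of a family of count lower previsions on the `𝒩^n`. -/
def QTimeConsistent {X : Type*} [Fintype X] [DecidableEq X] (Q : ∀ n : ℕ, (CVec X n → ℝ) → ℝ) : Prop :=
  ∀ n : ℕ, 1 ≤ n → ∀ (k : ℕ) (h : CVec X n → ℝ),
    Q n h = Q (n + k) (fun μ => ∑ m : CVec X n, ((nuSub μ m : ℝ) * (nu m : ℝ) / (nu μ : ℝ)) * h m)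

/-- The relative frequency vector `m/n ∈ Σ_X` of a count vector `m ∈ 𝒩^n`, `n ≥ 1`. -/
noncomputable def freqPt {X : Type*} [Fintype X] {n : ℕ} (hn : 0 < n) (m : CVec X n) :
    SimplexPt X :=
  ⟨fun x => (m.1 x : ℝ) / n,
   fun x => div_nonneg (Nat.cast_nonneg _) (Nat.cast_nonneg _),
   by
    rw [← Finset.sum_div]
    have h : (∑ x, (m.1 x : ℝ)) = (n : ℝ) := by exact_mod_cast m.2
    rw [h]
    exact div_self (Nat.cast_ne_zero.mpr hn.ne')⟩

/-- `ḡ(μ) = ∑_m (ν(m) ν(μ−m) / ν(μ)) g(m)`. -/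
noncomputable def gbar {X : Type*} [Fintype X] [DecidableEq X] {n k : ℕ}
    (g : CVec X n → ℝ) (μ : CVec X (n + k)) : ℝ :=
  ∑ m : CVec X n, ((nu m : ℝ) * (nuSub μ m : ℝ) / (nu μ : ℝ)) * g m

section Aux
variable {X : Type*} [Fintype X] [DecidableEq X] {N : ℕ}

lemma countMap_perm (z : Fin N → X) (π : Equiv.Perm (Fin N)) :
    countMap N (fun k => z (π k)) = countMap N z := by
  apply Subtype.ext
  funext x
  show (univ.filter fun k => z (π k) = x).card = (univ.filter fun k => z k = x).card
  apply Finset.card_bij (fun k _ => π k)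
  · intro a ha; simp only [mem_filter, mem_univ, true_and] at ha ⊢; exact ha
  · intro a _ b _ hab; exact π.injective hab
  · intro b hb
    refine ⟨π.symm b, ?_, by simp⟩
    simp only [mem_filter, mem_univ, true_and, Equiv.apply_symm_apply] at hb ⊢
    exact hb

lemma card_fiber (z : Fin N → X) (x : X) :
    Fintype.card {k // z k = x} = (countMap N z).1 x := by
  rw [Fintype.card_subtype]; rfl

/-- transitivity of the permutation action on an atom -/
lemma exists_perm_of_countMap_eq {z z' : Fin N → X} (h : countMap N z = countMap N z') :
    ∃ π : Equiv.Perm (Fin N), ∀ k, z (π k) = z' k := by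
  have hcard : ∀ x, Fintype.card {k // z' k = x} = Fintype.card {k // z k = x} := by
    intro x; rw [card_fiber, card_fiber, h]
  let e : ∀ x, {k // z' k = x} ≃ {k // z k = x} := fun x => Fintype.equivOfCardEq (hcard x)
  refine ⟨(Equiv.sigmaFiberEquiv z').symm.trans
    ((Equiv.sigmaCongrRight e).trans (Equiv.sigmaFiberEquiv z)), fun k => ?_⟩
  exact (e (z' k) ⟨k, rfl⟩).2.trans rfl

lemma stab_card (z : Fin N → X) :
    Fintype.card {π : Equiv.Perm (Fin N) // ∀ k, z (π k) = z k} =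
      ∏ x, ((countMap N z).1 x).factorial := by
  classical
  have key : Function.Bijective (fun σ : ∀ x, Equiv.Perm {k // z k = x} =>
      (⟨(Equiv.sigmaFiberEquiv z).symm.trans
        ((Equiv.sigmaCongrRight σ).trans (Equiv.sigmaFiberEquiv z)),
        fun k => ((σ (z k)) ⟨k, rfl⟩).2⟩ :
        {π : Equiv.Perm (Fin N) // ∀ k, z (π k) = z k})) := by
    constructor
    · intro σ σ' hσ
      have hval := congrArg (fun s => (s : {π : Equiv.Perm (Fin N) // ∀ k, z (π k) = z k}).1) hσ
      funext x
      apply Equiv.ext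
      rintro ⟨k, hk⟩
      subst hk
      have := congrFun (congrArg (fun (p : Equiv.Perm (Fin N)) => (p : Fin N → Fin N)) hval) k
      exact Subtype.ext this
    · rintro ⟨π, hπ⟩
      have hinj : ∀ x, Function.Bijective
          (fun s : {k // z k = x} => (⟨π s.1, by rw [hπ, s.2]⟩ : {k // z k = x})) := by
        intro x
        rw [← Finite.injective_iff_bijective]
        intro a b hab
        exact Subtype.ext (π.injective (congrArg Subtype.val hab))
      refine ⟨fun x => Equiv.ofBijective _ (hinj x), ?_⟩
      apply Subtype.ext
      apply Equiv.ext
      intro k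
      rfl
  rw [(Fintype.card_of_bijective key).symm, Fintype.card_pi]
  apply Finset.prod_congr rfl
  intro x _
  rw [Fintype.card_perm, card_fiber]
end Aux
section Aux2
variable {X : Type*} [Fintype X] [DecidableEq X] {N : ℕ}

lemma fiber_card {z z' : Fin N → X} (h : countMap N z = countMap N z') :
    (univ.filter fun π : Equiv.Perm (Fin N) => (fun k => z (π k)) = z').card =
      ∏ x, ((countMap N z).1 x).factorial := by
  classical
  obtain ⟨π₀, hπ₀⟩ := exists_perm_of_countMap_eq h
  rw [← stab_card z, Fintype.card_subtype]
  apply Finset.card_bij (fun π _ => π₀.symm.trans π)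
  · intro π hπ
    simp only [mem_filter, mem_univ, true_and] at hπ ⊢
    intro k
    show z (π (π₀.symm k)) = z k
    rw [congrFun hπ (π₀.symm k), ← hπ₀ (π₀.symm k), Equiv.apply_symm_apply]
  · intro a _ b _ hab
    have := congrArg (fun p => π₀.trans p) hab
    simpa [← Equiv.trans_assoc] using this
  · intro τ hτ
    simp only [mem_filter, mem_univ, true_and] at hτ
    refine ⟨π₀.trans τ, ?_, by ext k; simp⟩
    simp only [mem_filter, mem_univ, true_and]
    funext k
    show z (τ (π₀ k)) = z' k
    rw [hτ (π₀ k), hπ₀ k]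

lemma atom_nonempty (m : CVec X N) : ∃ z : Fin N → X, countMap N z = m := by
  classical
  have hcard : Fintype.card (Σ x : X, Fin (m.1 x)) = Fintype.card (Fin N) := by
    simp [Fintype.card_sigma, m.2]
  let e : Fin N ≃ Σ x : X, Fin (m.1 x) := (Fintype.equivOfCardEq hcard).symm
  refine ⟨fun k => (e k).1, Subtype.ext (funext fun x => ?_)⟩
  show (univ.filter fun k => (e k).1 = x).card = m.1 x
  rw [← Fintype.card_subtype]
  have e2 : {k // (e k).1 = x} ≃ {s : Σ x' : X, Fin (m.1 x') // s.1 = x} :=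
    e.subtypeEquiv (fun k => Iff.rfl)
  have e3 : {s : Σ x' : X, Fin (m.1 x') // s.1 = x} ≃ Fin (m.1 x) := by
    refine ⟨fun s => Fin.cast (congrArg m.1 s.2) s.1.2, fun i => ⟨⟨x, i⟩, rfl⟩, ?_, ?_⟩
    · rintro ⟨⟨x', i⟩, h⟩
      subst h
      rfl
    · intro i
      rfl
  rw [Fintype.card_congr (e2.trans e3), Fintype.card_fin]

lemma atom_card_mul (m : CVec X N) :
    (univ.filter fun z : Fin N → X => countMap N z = m).card * ∏ x, (m.1 x).factorial
      = N.factorial := by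
  classical
  obtain ⟨z, hz⟩ := atom_nonempty m
  have h1 : (Fintype.card (Equiv.Perm (Fin N))) = N.factorial := by
    rw [Fintype.card_perm, Fintype.card_fin]
  rw [← h1, ← Finset.card_univ,
    Finset.card_eq_sum_card_fiberwise
      (f := fun π : Equiv.Perm (Fin N) => fun k => z (π k))
      (t := univ.filter fun z' : Fin N → X => countMap N z' = m)
      (fun π _ => by simp [countMap_perm z π, hz])]
  rw [Finset.sum_congr rfl (fun z' hz' => by
    have h2 : countMap N z = countMap N z' := by
      simp only [mem_filter, mem_univ, true_and] at hz'
      rw [hz, hz']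
    rw [fiber_card h2, hz])]
  rw [Finset.sum_const, smul_eq_mul]

end Aux2
section Aux3
set_option linter.unusedSectionVars false
variable {X : Type*} [Fintype X] [DecidableEq X] {N : ℕ}

lemma nu_pos (m : CVec X N) : 0 < nu m := Nat.multinomial_pos _ _

lemma atom_card (m : CVec X N) :
    (univ.filter fun z : Fin N → X => countMap N z = m).card = nu m := by
  have h1 := atom_card_mul m
  have h2 : (∏ x, (m.1 x).factorial) * nu m = N.factorial := by
    have := Nat.multinomial_spec (univ : Finset X) m.1
    rwa [m.2] at this
  have hpos : 0 < ∏ x, (m.1 x).factorial :=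
    Finset.prod_pos fun x _ => Nat.factorial_pos _
  rw [mul_comm] at h1
  exact Nat.eq_of_mul_eq_mul_left hpos (h1.trans h2.symm)

set_option linter.unusedSectionVars false in
lemma finInf_le {Ω : Type*} [Finite Ω] (u : Ω → ℝ) (m : Ω) : sInf (Set.range u) ≤ u m :=
  csInf_le (Set.finite_range u).bddBelow ⟨m, rfl⟩

lemma le_finInf {Ω : Type*} [Finite Ω] [Nonempty Ω] {c : ℝ} (u : Ω → ℝ) (h : ∀ m, c ≤ u m) :
    c ≤ sInf (Set.range u) :=
  le_csInf (Set.range_nonempty u) (by rintro r ⟨m, rfl⟩; exact h m)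

lemma le_finSup {Ω : Type*} [Finite Ω] (u : Ω → ℝ) (m : Ω) : u m ≤ sSup (Set.range u) :=
  le_csSup (Set.finite_range u).bddAbove ⟨m, rfl⟩

lemma muhy_symm (f : (Fin N → X) → ℝ) (z : Fin N → X) :
    MuHy f (countMap N z) =
      (∑ π : Equiv.Perm (Fin N), f (fun k => z (π k))) / (N.factorial : ℝ) := by
  classical
  set m := countMap N z with hm
  set S : ℕ := ∏ x, (m.1 x).factorial with hS
  have hsum : (∑ π : Equiv.Perm (Fin N), f (fun k => z (π k)))
      = (S : ℝ) * ∑ z' ∈ univ.filter fun z' : Fin N → X => countMap N z' = m, f z' := by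
    rw [← Finset.sum_fiberwise_of_maps_to
      (g := fun π : Equiv.Perm (Fin N) => fun k => z (π k))
      (t := univ.filter fun z' : Fin N → X => countMap N z' = m)
      (fun π _ => by simp [countMap_perm z π, hm])]
    rw [Finset.mul_sum]
    apply Finset.sum_congr rfl
    intro z' hz'
    have h2 : countMap N z = countMap N z' := by
      simp only [mem_filter, mem_univ, true_and] at hz'
      rw [← hm, hz']
    rw [Finset.sum_congr rfl (fun π hπ => by
        simp only [mem_filter, mem_univ, true_and] at hπ
        rw [hπ]), Finset.sum_const, fiber_card h2, nsmul_eq_mul, ← hm]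
  have hfact : (N.factorial : ℝ) = (nu m : ℝ) * (S : ℝ) := by
    rw [← Nat.cast_mul, ← atom_card m, ← atom_card_mul m]
  have hS0 : (S : ℝ) ≠ 0 := by
    have : 0 < S := Finset.prod_pos fun x _ => Nat.factorial_pos _
    positivity
  have hnu0 : (nu m : ℝ) ≠ 0 := by
    have := nu_pos m; positivity
  rw [hsum, hfact, MuHy]
  field_simp

lemma muhy_add (f g : (Fin N → X) → ℝ) (m : CVec X N) :
    MuHy (f + g) m = MuHy f m + MuHy g m := by
  unfold MuHy
  rw [← add_div]
  congr 1
  exact Finset.sum_add_distrib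

lemma muhy_smul (l : ℝ) (f : (Fin N → X) → ℝ) (m : CVec X N) :
    MuHy (fun ω => l * f ω) m = l * MuHy f m := by
  unfold MuHy
  rw [← Finset.mul_sum, mul_div_assoc]

lemma muhy_perm (f : (Fin N → X) → ℝ) (π : Equiv.Perm (Fin N)) (m : CVec X N) :
    MuHy (fun x => f (fun k => x (π k))) m = MuHy f m := by
  unfold MuHy
  congr 1
  apply Finset.sum_nbij' (fun z => fun k => z (π k)) (fun z => fun k => z (π.symm k))
  · intro z hz
    simp only [mem_filter, mem_univ, true_and] at hz ⊢
    rw [countMap_perm, hz]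
  · intro z hz
    simp only [mem_filter, mem_univ, true_and] at hz ⊢
    rw [countMap_perm, hz]
  · intro z _; funext k; simp
  · intro z _; funext k; simp
  · intro z _; rfl

lemma inf_le_muhy (f : (Fin N → X) → ℝ) (m : CVec X N) [Nonempty X] :
    sInf (Set.range f) ≤ MuHy f m := by
  unfold MuHy
  rw [← atom_card m]
  have hcard : 0 < ((univ.filter fun z : Fin N → X => countMap N z = m).card : ℝ) := by
    rw [atom_card m]; exact_mod_cast nu_pos m
  rw [le_div_iff₀ hcard, mul_comm]
  calc ((univ.filter fun z : Fin N → X => countMap N z = m).card : ℝ) * sInf (Set.range f)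
      = ∑ _z ∈ univ.filter fun z : Fin N → X => countMap N z = m, sInf (Set.range f) := by
        rw [Finset.sum_const, nsmul_eq_mul]
    _ ≤ _ := Finset.sum_le_sum fun z _ => finInf_le f z
end Aux3
section Aux4
set_option linter.unusedSectionVars false
variable {Ω : Type*} [Fintype Ω] [Nonempty Ω] {P : (Ω → ℝ) → ℝ}

lemma coh_zero (hP : LowerPrevCoherent P) : P (fun _ => (0:ℝ)) = 0 := by
  simpa using hP.2.1 (fun _ => (0:ℝ)) 0 le_rfl

lemma coh_nonneg (hP : LowerPrevCoherent P) {f : Ω → ℝ} (h : ∀ ω, 0 ≤ f ω) : 0 ≤ P f :=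
  le_trans (le_finInf f h) (hP.1 f)

lemma coh_mono (hP : LowerPrevCoherent P) {f g : Ω → ℝ} (h : ∀ ω, f ω ≤ g ω) :
    P f ≤ P g := by
  have h1 : P f + P (g - f) ≤ P (f + (g - f)) := hP.2.2 f (g - f)
  have h2 : (0:ℝ) ≤ P (g - f) := coh_nonneg hP fun ω => by
    simp only [Pi.sub_apply]; linarith [h ω]
  have h3 : f + (g - f) = g := by funext ω; simp
  rw [h3] at h1
  linarith

lemma coh_const_add (hP : LowerPrevCoherent P) (c : ℝ) (f : Ω → ℝ) :
    c + P f ≤ P (fun ω => c + f ω) := by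
  have h1 : P (fun _ => c) + P f ≤ P ((fun _ => c) + f) := hP.2.2 _ f
  have h2 : c ≤ P (fun _ => c) := by
    have := hP.1 (fun _ => c)
    rwa [Set.range_const, csInf_singleton] at this
  have h3 : ((fun _ => c) + f) = fun ω => c + f ω := rfl
  rw [h3] at h1
  linarith

lemma coh_sum (hP : LowerPrevCoherent P) {ι : Type*} (s : Finset ι) (t : ι → Ω → ℝ) :
    ∑ i ∈ s, P (t i) ≤ P (fun ω => ∑ i ∈ s, t i ω) := by
  classical
  induction s using Finset.cons_induction with
  | empty => simp [coh_zero hP]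
  | cons a s ha ih =>
    rw [Finset.sum_cons]
    have h1 : P (t a) + P (fun ω => ∑ i ∈ s, t i ω) ≤
        P (t a + fun ω => ∑ i ∈ s, t i ω) := hP.2.2 _ _
    have h2 : (t a + fun ω => ∑ i ∈ s, t i ω) = fun ω => ∑ i ∈ cons a s ha, t i ω := by
      funext ω; simp [Finset.sum_insert ha]
    rw [h2] at h1
    linarith
end Aux4

section Aux5
set_option linter.unusedSectionVars false
variable {X : Type*} [Fintype X] [DecidableEq X] [Nonempty X] {N : ℕ}
variable {E : ((Fin N → X) → ℝ) → ℝ}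

lemma exch_perm_le (hE : LowerPrevCoherent E) (hEx : Exchangeable E)
    (g : (Fin N → X) → ℝ) (π : Equiv.Perm (Fin N)) :
    E g ≤ E (fun z => g (fun k => z (π k))) := by
  have hd := hEx g π
  have h1 := hE.2.2 g (fun z => g (fun k => z (π k)) - g z)
  have h2 : (g + fun z => g (fun k => z (π k)) - g z) = fun z => g (fun k => z (π k)) := by
    funext z; simp
  rw [h2] at h1
  linarith

lemma exch_perm_eq (hE : LowerPrevCoherent E) (hEx : Exchangeable E)
    (g : (Fin N → X) → ℝ) (π : Equiv.Perm (Fin N)) :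
    E (fun z => g (fun k => z (π k))) = E g := by
  refine le_antisymm ?_ (exch_perm_le hE hEx g π)
  have h1 := exch_perm_le hE hEx (fun z => g (fun k => z (π k))) π.symm
  have h2 : (fun z => (fun y => g (fun k => y (π k))) (fun k => z (π.symm k))) = g := by
    funext z; simp
  rwa [h2] at h1

/-- The key symmetrization identity: a coherent exchangeable lower prevision assigns
`f` the same value as its symmetrization `MuHy f ∘ countMap`. -/
lemma exch_muhy_eq (hE : LowerPrevCoherent E) (hEx : Exchangeable E)
    (f : (Fin N → X) → ℝ) :
    E (fun z => MuHy f (countMap N z)) = E f := by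
  classical
  set Nf : ℝ := (N.factorial : ℝ) with hNf
  have hNf0 : 0 < Nf := by rw [hNf]; exact_mod_cast N.factorial_pos
  have hsym : (fun z => MuHy f (countMap N z)) =
      fun z => Nf⁻¹ * ∑ π : Equiv.Perm (Fin N), f (fun k => z (π k)) := by
    funext z
    rw [muhy_symm, div_eq_inv_mul]
  have hEsym : E (fun z => MuHy f (countMap N z)) =
      Nf⁻¹ * E (fun z => ∑ π : Equiv.Perm (Fin N), f (fun k => z (π k))) := by
    rw [hsym]
    exact hE.2.1 _ _ (by positivity)
  have hsum_ge : (Nf * E f) ≤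
      E (fun z => ∑ π : Equiv.Perm (Fin N), f (fun k => z (π k))) := by
    have h1 := coh_sum hE (univ : Finset (Equiv.Perm (Fin N)))
      (fun π => fun z => f (fun k => z (π k)))
    have h2 : ∑ π : Equiv.Perm (Fin N), E (fun z => f (fun k => z (π k))) = Nf * E f := by
      rw [Finset.sum_congr rfl fun π _ => exch_perm_eq hE hEx f π, Finset.sum_const,
        nsmul_eq_mul, Finset.card_univ, Fintype.card_perm, Fintype.card_fin, hNf]
    rw [h2] at h1
    exact h1
  have hge : E f ≤ E (fun z => MuHy f (countMap N z)) := by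
    rw [hEsym]
    calc E f = Nf⁻¹ * (Nf * E f) := by field_simp
    _ ≤ _ := by
      apply mul_le_mul_of_nonneg_left hsum_ge (by positivity)
  have hle : E (fun z => MuHy f (countMap N z)) ≤ E f := by
    set r : (Fin N → X) → ℝ :=
      fun z => Nf⁻¹ * ∑ π : Equiv.Perm (Fin N), (f z - f (fun k => z (π k))) with hr
    have hid : f = (fun z => MuHy f (countMap N z)) + r := by
      funext z
      simp only [Pi.add_apply, hr]
      rw [congrFun hsym z]
      rw [Finset.sum_sub_distrib, Finset.sum_const, Finset.card_univ, Fintype.card_perm,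
        Fintype.card_fin, nsmul_eq_mul, ← hNf]
      field_simp
      ring
    have h1 : E (fun z => MuHy f (countMap N z)) + E r ≤ E f := by
      have := hE.2.2 (fun z => MuHy f (countMap N z)) r
      rwa [← hid] at this
    have h2 : (0:ℝ) ≤ E r := by
      have h3 : E r = Nf⁻¹ *
          E (fun z => ∑ π : Equiv.Perm (Fin N), (f z - f (fun k => z (π k)))) :=
        hE.2.1 _ _ (by positivity)
      have h4 : (0:ℝ) ≤
          E (fun z => ∑ π : Equiv.Perm (Fin N), (f z - f (fun k => z (π k)))) := by
        refine le_trans ?_ (coh_sum hE (univ : Finset (Equiv.Perm (Fin N))) (fun π => fun z => f z - f (fun k => z (π k))))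
        apply Finset.sum_nonneg
        intro π _
        have h5 := hEx (fun z => f (fun k => z (π k))) π.symm
        have h6 : (fun x => (fun z => f (fun k => z (π k))) (fun k => x (π.symm k)) -
            (fun z => f (fun k => z (π k))) x) =
            fun z => f z - f (fun k => z (π k)) := by
          funext x
          simp
        rwa [h6] at h5
      rw [h3]
      positivity
    linarith
  exact le_antisymm hle hge

end Aux5
section Aux6
lemma mul_finInf {Ω : Type*} [Finite Ω] [Nonempty Ω] {l : ℝ} (hl : 0 ≤ l) (u : Ω → ℝ) :
    l * sInf (Set.range u) = sInf (Set.range fun m => l * u m) := by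
  apply le_antisymm
  · exact le_finInf _ fun m => mul_le_mul_of_nonneg_left (finInf_le u m) hl
  · obtain ⟨m₀, hm₀⟩ : sInf (Set.range u) ∈ Set.range u :=
      (Set.range_nonempty u).csInf_mem (Set.finite_range u)
    rw [← hm₀]
    exact finInf_le (fun m => l * u m) m₀

lemma csSup_mul_img {l : ℝ} (hl : 0 < l) {s : Set ℝ} (hne : s.Nonempty) (hbdd : BddAbove s) :
    sSup ((fun r => l * r) '' s) = l * sSup s := by
  have hbddi : BddAbove ((fun r => l * r) '' s) := by
    obtain ⟨B, hB⟩ := hbdd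
    refine ⟨l * B, ?_⟩
    rintro r ⟨r', hr', rfl⟩
    exact mul_le_mul_of_nonneg_left (hB hr') hl.le
  apply le_antisymm
  · apply csSup_le (hne.image _)
    rintro r ⟨r', hr', rfl⟩
    exact mul_le_mul_of_nonneg_left (le_csSup hbdd hr') hl.le
  · have h1 : sSup s ≤ sSup ((fun r => l * r) '' s) / l := by
      apply csSup_le hne
      intro r hr
      rw [le_div_iff₀ hl, mul_comm]
      exact le_csSup hbddi ⟨r, hr, rfl⟩
    calc l * sSup s ≤ l * (sSup ((fun r => l * r) '' s) / l) :=
          mul_le_mul_of_nonneg_left h1 hl.le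
    _ = _ := by field_simp
end Aux6
/-- when `Q` is real-valued on `H` and avoids sure loss, the exchangeable
natural extension of `P₀` is `f ↦ E_Q(MuHy^N(f|·))`, with `E_Q` the natural extension
of `Q`. -/
theorem stmt16 {X : Type*} [Fintype X] [DecidableEq X] [Nonempty X] {N : ℕ} (hN : 1 ≤ N)
    (K : Set ((Fin N → X) → ℝ)) (hK : K.Nonempty)
    (P0 : ((Fin N → X) → ℝ) → ℝ)
    (Q : (CVec X N → ℝ) → ℝ)
    (hQ : ∀ g : CVec X N → ℝ,
      Q g = sSup {r : ℝ | ∃ f ∈ K, (fun m => MuHy f m) = g ∧ P0 f = r})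
    (hbdd : ∀ g : CVec X N → ℝ, (∃ f ∈ K, (fun m => MuHy f m) = g) →
      BddAbove {r : ℝ | ∃ f ∈ K, (fun m => MuHy f m) = g ∧ P0 f = r})
    (hasl : ∀ (n : ℕ) (gs : Fin n → (CVec X N → ℝ)) (lam : Fin n → ℝ),
      (∀ i, ∃ f ∈ K, (fun m => MuHy f m) = gs i) → (∀ i, 0 ≤ lam i) →
      ∃ m : CVec X N, 0 ≤ ∑ i, lam i * (gs i m - Q (gs i)))
    (EQ : (CVec X N → ℝ) → ℝ)
    (hEQ : ∀ h : CVec X N → ℝ,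
      EQ h = sSup {r : ℝ | ∃ (n : ℕ) (gs : Fin n → (CVec X N → ℝ)) (lam : Fin n → ℝ),
        (∀ i, ∃ f ∈ K, (fun m => MuHy f m) = gs i) ∧ (∀ i, 0 ≤ lam i) ∧
        r = sInf (Set.range fun m : CVec X N =>
          h m - ∑ i, lam i * (gs i m - Q (gs i)))})
    (F : ((Fin N → X) → ℝ) → ℝ)
    (hF : ∀ f : (Fin N → X) → ℝ, F f = EQ (fun m => MuHy f m)) :
    LowerPrevCoherent F ∧ Exchangeable F ∧ (∀ f ∈ K, P0 f ≤ F f) ∧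
      ∀ E : ((Fin N → X) → ℝ) → ℝ, LowerPrevCoherent E → Exchangeable E →
        (∀ f ∈ K, P0 f ≤ E f) → ∀ f, F f ≤ E f := by
  classical
  -- the defining set of the natural extension
  let Sset : (CVec X N → ℝ) → Set ℝ := fun h =>
    {r : ℝ | ∃ (n : ℕ) (gs : Fin n → (CVec X N → ℝ)) (lam : Fin n → ℝ),
      (∀ i, ∃ f ∈ K, (fun m => MuHy f m) = gs i) ∧ (∀ i, 0 ≤ lam i) ∧
      r = sInf (Set.range fun m : CVec X N =>
        h m - ∑ i, lam i * (gs i m - Q (gs i)))}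
  have hEQ' : ∀ h, EQ h = sSup (Sset h) := hEQ
  -- the trivial (n = 0) element
  have mem0 : ∀ h : CVec X N → ℝ, sInf (Set.range h) ∈ Sset h := by
    intro h
    refine ⟨0, fun i => i.elim0, fun i => i.elim0, fun i => i.elim0, fun i => i.elim0, ?_⟩
    congr 1
    funext m
    simp
  have Sne : ∀ h : CVec X N → ℝ, (Sset h).Nonempty := fun h => ⟨_, mem0 h⟩
  -- every element of `Sset h` is at most `sSup (range h)` (avoiding sure loss)
  have Sle : ∀ h : CVec X N → ℝ, ∀ r ∈ Sset h, r ≤ sSup (Set.range h) := by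
    rintro h r ⟨n, gs, lam, hgs, hlam, rfl⟩
    obtain ⟨m₀, hm₀⟩ := hasl n gs lam hgs hlam
    calc sInf (Set.range fun m => h m - ∑ i, lam i * (gs i m - Q (gs i)))
        ≤ h m₀ - ∑ i, lam i * (gs i m₀ - Q (gs i)) := finInf_le _ m₀
      _ ≤ h m₀ := by linarith
      _ ≤ sSup (Set.range h) := le_finSup h m₀
  have Sbdd : ∀ h : CVec X N → ℝ, BddAbove (Sset h) :=
    fun h => ⟨sSup (Set.range h), fun r hr => Sle h r hr⟩
  -- sSup of the set for the zero gamble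
  have hzmem : (0:ℝ) ∈ Sset (fun _ => (0:ℝ)) := by
    have := mem0 (fun _ => (0:ℝ))
    rwa [Set.range_const, csInf_singleton] at this
  have hSup0 : sSup (Sset (fun _ => (0:ℝ))) = 0 := by
    apply le_antisymm
    · apply csSup_le (Sne _)
      intro r hr
      have := Sle _ r hr
      rwa [Set.range_const, csSup_singleton] at this
    · exact le_csSup (Sbdd _) hzmem
  -- scaling
  have hscale : ∀ (h : CVec X N → ℝ) (l : ℝ), 0 < l →
      sSup (Sset (fun m => l * h m)) = l * sSup (Sset h) := by
    intro h l hl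
    have hset : Sset (fun m => l * h m) = (fun r => l * r) '' Sset h := by
      ext r
      constructor
      · rintro ⟨n, gs, lam, hgs, hlam, rfl⟩
        refine ⟨sInf (Set.range fun m => h m - ∑ i, (lam i / l) * (gs i m - Q (gs i))),
          ⟨n, gs, fun i => lam i / l, hgs, fun i => div_nonneg (hlam i) hl.le, rfl⟩, ?_⟩
        dsimp only
        rw [mul_finInf hl.le]
        refine congrArg sInf (congrArg Set.range (funext fun m => ?_))
        rw [mul_sub, Finset.mul_sum]
        congr 1
        refine Finset.sum_congr rfl fun i _ => ?_
        field_simp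
      · rintro ⟨r', ⟨n, gs, lam, hgs, hlam, rfl⟩, rfl⟩
        refine ⟨n, gs, fun i => l * lam i, hgs, fun i => mul_nonneg hl.le (hlam i), ?_⟩
        dsimp only
        rw [mul_finInf hl.le]
        refine congrArg sInf (congrArg Set.range (funext fun m => ?_))
        rw [mul_sub, Finset.mul_sum]
        congr 1
        exact Finset.sum_congr rfl fun i _ => by ring
    rw [hset, csSup_mul_img hl (Sne h) (Sbdd h)]
  -- superadditivity at the level of the sets
  have hsupadd : ∀ h1 h2 : CVec X N → ℝ,
      sSup (Sset h1) + sSup (Sset h2) ≤ sSup (Sset (fun m => h1 m + h2 m)) := by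
    intro h1 h2
    have key : ∀ r1 ∈ Sset h1, ∀ r2 ∈ Sset h2,
        r1 + r2 ≤ sSup (Sset (fun m => h1 m + h2 m)) := by
      rintro r1 ⟨n1, gs1, lam1, hgs1, hlam1, rfl⟩ r2 ⟨n2, gs2, lam2, hgs2, hlam2, rfl⟩
      set gs : Fin (n1 + n2) → (CVec X N → ℝ) := Fin.addCases gs1 gs2 with hgsdef
      set lam : Fin (n1 + n2) → ℝ := Fin.addCases lam1 lam2 with hlamdef
      have hmem : sInf (Set.range fun m : CVec X N =>
          (h1 m + h2 m) - ∑ i, lam i * (gs i m - Q (gs i)))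
            ∈ Sset (fun m => h1 m + h2 m) := by
        refine ⟨n1 + n2, gs, lam, ?_, ?_, rfl⟩
        · intro i
          refine Fin.addCases (motive := fun i => ∃ f ∈ K, (fun m => MuHy f m) = gs i)
            (fun j => ?_) (fun j => ?_) i
          · simp only [hgsdef, Fin.addCases_left]; exact hgs1 j
          · simp only [hgsdef, Fin.addCases_right]; exact hgs2 j
        · intro i
          refine Fin.addCases (motive := fun i => 0 ≤ lam i)
            (fun j => ?_) (fun j => ?_) i
          · simp only [hlamdef, Fin.addCases_left]; exact hlam1 j
          · simp only [hlamdef, Fin.addCases_right]; exact hlam2 j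
      have hsplit : (fun m : CVec X N =>
          (h1 m + h2 m) - ∑ i, lam i * (gs i m - Q (gs i))) =
          fun m => (h1 m - ∑ i, lam1 i * (gs1 i m - Q (gs1 i)))
            + (h2 m - ∑ i, lam2 i * (gs2 i m - Q (gs2 i))) := by
        funext m
        rw [Fin.sum_univ_add]
        simp only [hgsdef, hlamdef, Fin.addCases_left, Fin.addCases_right]
        ring
      refine le_trans ?_ (le_csSup (Sbdd _) hmem)
      rw [hsplit]
      exact le_finInf _ fun m => add_le_add (finInf_le _ m) (finInf_le _ m)
    rw [← le_sub_iff_add_le]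
    apply csSup_le (Sne h1)
    intro r1 hr1
    rw [le_sub_iff_add_le, add_comm, ← le_sub_iff_add_le]
    apply csSup_le (Sne h2)
    intro r2 hr2
    rw [le_sub_iff_add_le]
    linarith [key r1 hr1 r2 hr2]
  -- ================= the four claims =================
  have hmuhy_sub : ∀ (f g : (Fin N → X) → ℝ) (m : CVec X N),
      MuHy (fun z => f z - g z) m = MuHy f m - MuHy g m := by
    intro f g m
    unfold MuHy
    rw [← sub_div]
    congr 1
    exact Finset.sum_sub_distrib (f := fun z => f z) (g := fun z => g z)
  refine ⟨⟨?_, ?_, ?_⟩, ?_, ?_, ?_⟩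
  · -- bounds
    intro f
    rw [hF, hEQ']
    refine le_trans ?_ (le_csSup (Sbdd _) (mem0 (fun m => MuHy f m)))
    exact le_finInf _ fun m => inf_le_muhy f m
  · -- positive homogeneity
    intro f l hl
    rw [hF, hF, hEQ', hEQ']
    have hMu : (fun m => MuHy (fun ω => l * f ω) m) = fun m => l * MuHy f m :=
      funext (muhy_smul l f)
    rw [hMu]
    rcases eq_or_lt_of_le hl with hl0 | hl0
    · subst hl0
      have h1 : (fun m : CVec X N => (0:ℝ) * MuHy f m) = fun _ => (0:ℝ) := by
        funext m; ring
      rw [h1, hSup0, zero_mul]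
    · exact hscale _ l hl0
  · -- superadditivity
    intro f g
    rw [hF, hF, hF, hEQ', hEQ', hEQ']
    have hMu : (fun m => MuHy (f + g) m) = fun m => MuHy f m + MuHy g m :=
      funext (muhy_add f g)
    rw [hMu]
    exact hsupadd _ _
  · -- exchangeability
    intro f π
    rw [hF, hEQ']
    have hMu : (fun m => MuHy (fun x => f (fun k => x (π k)) - f x) m) =
        fun _ => (0:ℝ) := by
      funext m
      rw [hmuhy_sub (fun x => f (fun k => x (π k))) f m, muhy_perm f π m, sub_self]
    rw [hMu]
    exact le_csSup (Sbdd _) hzmem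
  · -- dominates P0 on K
    intro f hf
    rw [hF, hEQ']
    set g : CVec X N → ℝ := fun m => MuHy f m with hg
    have hQge : P0 f ≤ Q g := by
      rw [hQ]
      exact le_csSup (hbdd g ⟨f, hf, rfl⟩) ⟨f, hf, rfl, rfl⟩
    have hmem : Q g ∈ Sset g := by
      refine ⟨1, fun _ => g, fun _ => 1, fun i => ⟨f, hf, rfl⟩, fun i => zero_le_one, ?_⟩
      have h1 : (fun m : CVec X N => g m - ∑ i : Fin 1, 1 * (g m - Q g)) =
          fun _ => Q g := by
        funext m
        rw [Fin.sum_univ_one]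
        ring
      rw [h1, Set.range_const, csInf_singleton]
    exact le_trans hQge (le_csSup (Sbdd g) hmem)
  · -- minimality
    intro E hE hEx hdom f
    rw [hF, hEQ']
    apply csSup_le (Sne _)
    rintro r ⟨n, gs, lam, hgs, hlam, rfl⟩
    set u : CVec X N → ℝ :=
      fun m => MuHy f m - ∑ i, lam i * (gs i m - Q (gs i)) with hu
    apply le_of_forall_pos_le_add
    intro ε hε
    have hlamsum : (0:ℝ) ≤ ∑ i, lam i := Finset.sum_nonneg fun i _ => hlam i
    set ε' : ℝ := ε / (∑ i, lam i + 1) with hε'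
    have hε'pos : 0 < ε' := by
      rw [hε']
      positivity
    -- choose good representatives
    have hrep : ∀ i, ∃ fi, fi ∈ K ∧ (fun m => MuHy fi m) = gs i ∧
        Q (gs i) - ε' < P0 fi := by
      intro i
      obtain ⟨f0, hf0, hfg0⟩ := hgs i
      have hlt : Q (gs i) - ε' <
          sSup {r : ℝ | ∃ f' ∈ K, (fun m => MuHy f' m) = gs i ∧ P0 f' = r} := by
        rw [← hQ]
        linarith
      have hne : {r : ℝ | ∃ f' ∈ K, (fun m => MuHy f' m) = gs i ∧ P0 f' = r}.Nonempty :=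
        ⟨P0 f0, f0, hf0, hfg0, rfl⟩
      obtain ⟨r', ⟨f', hf', hfg', rfl⟩, hr'⟩ := exists_lt_of_lt_csSup hne hlt
      exact ⟨f', hf', hfg', hr'⟩
    choose fs hfsK hfsMu hfsP using hrep
    -- the pointwise inequality
    have hexp : ∀ m : CVec X N, ∑ i, lam i * (gs i m - Q (gs i)) =
        ∑ i, lam i * gs i m - ∑ i, lam i * Q (gs i) := by
      intro m
      rw [← Finset.sum_sub_distrib]
      exact Finset.sum_congr rfl fun i _ => by ring
    have hpt : ∀ z : Fin N → X,
        (sInf (Set.range u) - ∑ i, lam i * Q (gs i)) +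
          ∑ i, lam i * MuHy (fs i) (countMap N z) ≤ MuHy f (countMap N z) := by
      intro z
      have h1 : sInf (Set.range u) ≤ u (countMap N z) := finInf_le u (countMap N z)
      rw [hu] at h1
      dsimp only at h1
      rw [hexp (countMap N z)] at h1
      have h2 : ∀ i, gs i (countMap N z) = MuHy (fs i) (countMap N z) := fun i =>
        (congrFun (hfsMu i) (countMap N z)).symm
      have h3 : ∑ i, lam i * gs i (countMap N z) =
          ∑ i, lam i * MuHy (fs i) (countMap N z) :=
        Finset.sum_congr rfl fun i _ => by rw [h2 i]
      rw [h3] at h1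
      linarith
    -- lower bound for E f
    have hEf : E f = E (fun z => MuHy f (countMap N z)) := (exch_muhy_eq hE hEx f).symm
    have hchain : (sInf (Set.range u) - ∑ i, lam i * Q (gs i)) +
        ∑ i, lam i * (Q (gs i) - ε') ≤ E f := by
      rw [hEf]
      have s1 : E (fun z => (sInf (Set.range u) - ∑ i, lam i * Q (gs i)) +
          ∑ i, lam i * MuHy (fs i) (countMap N z)) ≤
          E (fun z => MuHy f (countMap N z)) := coh_mono hE hpt
      have s2 : (sInf (Set.range u) - ∑ i, lam i * Q (gs i)) +
          E (fun z => ∑ i, lam i * MuHy (fs i) (countMap N z)) ≤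
          E (fun z => (sInf (Set.range u) - ∑ i, lam i * Q (gs i)) +
            ∑ i, lam i * MuHy (fs i) (countMap N z)) :=
        coh_const_add hE _ _
      have s3 : ∑ i, E (fun z => lam i * MuHy (fs i) (countMap N z)) ≤
          E (fun z => ∑ i, lam i * MuHy (fs i) (countMap N z)) :=
        coh_sum hE univ _
      have s4 : ∀ i, lam i * (Q (gs i) - ε') ≤
          E (fun z => lam i * MuHy (fs i) (countMap N z)) := by
        intro i
        rw [hE.2.1 _ (lam i) (hlam i), exch_muhy_eq hE hEx (fs i)]
        have := hdom (fs i) (hfsK i)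
        have h5 := (hfsP i).le
        calc lam i * (Q (gs i) - ε') ≤ lam i * P0 (fs i) :=
              mul_le_mul_of_nonneg_left (by linarith) (hlam i)
        _ ≤ lam i * E (fs i) := mul_le_mul_of_nonneg_left this (hlam i)
      have s5 : ∑ i, lam i * (Q (gs i) - ε') ≤
          ∑ i, E (fun z => lam i * MuHy (fs i) (countMap N z)) :=
        Finset.sum_le_sum fun i _ => s4 i
      linarith
    -- wrap up
    have hfinal : ∑ i, lam i * (Q (gs i) - ε') =
        ∑ i, lam i * Q (gs i) - ε' * ∑ i, lam i := by
      rw [Finset.mul_sum, ← Finset.sum_sub_distrib]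
      exact Finset.sum_congr rfl fun i _ => by ring
    rw [hfinal] at hchain
    have hε'bound : ε' * ∑ i, lam i ≤ ε := by
      rw [hε']
      rw [div_mul_eq_mul_div, div_le_iff₀ (by positivity : (0:ℝ) < ∑ i, lam i + 1)]
      nlinarith
    linarith
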